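/- In the geometric realization of a connected simply connected Cartan graph 𝒞 with real root system, let b ∈ A and let H ⊂ V be a hyperplane. Then H ∈ W^b (i.e. H = ker β for some β ∈ B^b) if and only if H ∩ K^b = ∅ and H ∩ cl(K^b) spans H. -/

import Mathlib

open Set

noncomputable section

section Arrangements

variable {V : Type*} [AddCommGroup V] [Module ℝ V] [TopologicalSpace V]

/-- The kernel of a linear functional, as a subset of `V`. -/
def dualKer (α : Module.Dual ℝ V) : Set V := {v | α v = 0}

/-- A linear hyperplane: the kernel of a nonzero linear functional. -/
def IsLinearHyperplane (H : Set V) : Prop :=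
  ∃ α : Module.Dual ℝ V, α ≠ 0 ∧ H = dualKer α

/-- A hyperplane arrangement `(𝒜, T)`: `T` is an open convex cone, `𝒜` a set of linear
hyperplanes, each meeting `T`, which is locally finite in `T`. -/
structure IsHyperplaneArrangement (𝒜 : Set (Set V)) (T : Set V) : Prop where
  T_nonempty : T.Nonempty
  T_open : IsOpen T
  T_convex : Convex ℝ T
  T_cone : ∀ x ∈ T, ∀ c : ℝ, 0 < c → c • x ∈ T
  hyperplanes : ∀ H ∈ 𝒜, IsLinearHyperplane H
  meets : ∀ H ∈ 𝒜, (H ∩ T).Nonempty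
  locallyFinite : ∀ x ∈ T, ∃ U : Set V, IsOpen U ∧ x ∈ U ∧ U ⊆ T ∧
    {H ∈ 𝒜 | (H ∩ U).Nonempty}.Finite

/-- The chambers: connected components of `T \ ⋃ 𝒜`. -/
def chambersOf (𝒜 : Set (Set V)) (T : Set V) : Set (Set V) :=
  {K | ∃ x ∈ T \ ⋃₀ 𝒜, K = connectedComponentIn (T \ ⋃₀ 𝒜) x}

/-- `H` is a wall of the chamber `K`: a hyperplane missing `K` such that
`H ∩ cl(K)` spans `H`. -/
def IsWall (K H : Set V) : Prop :=
  IsLinearHyperplane H ∧ H ∩ K = ∅ ∧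
    (Submodule.span ℝ (H ∩ closure K) : Set V) = H

/-- An open simplicial cone: `⋂_{α ∈ B} α⁻¹(ℝ_{>0})` for a basis `B` of the dual space. -/
def IsOpenSimplicialCone (K : Set V) : Prop :=
  ∃ b : Module.Basis (Fin (Module.finrank ℝ V)) ℝ (Module.Dual ℝ V),
    K = {v | ∀ i, 0 < b i v}

/-- A Tits arrangement: a hyperplane arrangement all of whose chambers are open simplicial
cones (simplicial) and such that every wall of every chamber belongs to `𝒜` (thin). -/
structure IsTitsArrangement (𝒜 : Set (Set V)) (T : Set V) extends
    IsHyperplaneArrangement 𝒜 T : Prop where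
  simplicial : ∀ K ∈ chambersOf 𝒜 T, IsOpenSimplicialCone K
  thin : ∀ K ∈ chambersOf 𝒜 T, ∀ H : Set V, IsWall K H → H ∈ 𝒜

/-- `R` is a root system with associated arrangement `𝒜`: `0 ∉ R`, `R = -R` and
`𝒜 = {ker α | α ∈ R}`. -/
def IsAssociatedRootSystem (𝒜 : Set (Set V)) (R : Set (Module.Dual ℝ V)) : Prop :=
  (0 : Module.Dual ℝ V) ∉ R ∧ (∀ α ∈ R, -α ∈ R) ∧ 𝒜 = {H | ∃ α ∈ R, H = dualKer α}

/-- The root basis `B^K` of a chamber `K`. -/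
def rootBasisOf (R : Set (Module.Dual ℝ V)) (K : Set V) : Set (Module.Dual ℝ V) :=
  {α ∈ R | IsWall K (dualKer α) ∧ ∀ x ∈ K, 0 < α x}

/-- `β` is a non-negative real linear combination of elements of `B`. -/
def InNNRealSpan (B : Set (Module.Dual ℝ V)) (β : Module.Dual ℝ V) : Prop :=
  ∃ (s : Finset (Module.Dual ℝ V)) (c : Module.Dual ℝ V → ℝ),
    ↑s ⊆ B ∧ (∀ α ∈ s, 0 ≤ c α) ∧ β = ∑ α ∈ s, c α • α

/-- `β` is a non-negative integral linear combination of elements of `B`. -/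
def InNatSpan (B : Set (Module.Dual ℝ V)) (β : Module.Dual ℝ V) : Prop :=
  ∃ (s : Finset (Module.Dual ℝ V)) (c : Module.Dual ℝ V → ℕ),
    ↑s ⊆ B ∧ β = ∑ α ∈ s, (c α : ℝ) • α

/-- `β` is an integral linear combination of elements of `B`. -/
def InIntSpan (B : Set (Module.Dual ℝ V)) (β : Module.Dual ℝ V) : Prop :=
  ∃ (s : Finset (Module.Dual ℝ V)) (c : Module.Dual ℝ V → ℤ),
    ↑s ⊆ B ∧ β = ∑ α ∈ s, (c α : ℝ) • α

/-- The crystallographic property: `R ⊆ ±∑_{α ∈ B^K} ℕ₀ α` for every chamber `K`. -/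
def IsCrystallographic (𝒜 : Set (Set V)) (T : Set V) (R : Set (Module.Dual ℝ V)) : Prop :=
  ∀ K ∈ chambersOf 𝒜 T, ∀ β ∈ R,
    InNatSpan (rootBasisOf R K) β ∨ InNatSpan (rootBasisOf R K) (-β)

/-- The chamber complex `𝒮(𝒜,T)`. -/
def chamberComplexOf (𝒜 : Set (Set V)) (T : Set V) : Set (Set V) :=
  {S | ∃ K ∈ chambersOf 𝒜 T, ∃ W : Set (Set V),
    (∀ H ∈ W, IsWall K H) ∧ S = closure K ∩ ⋂₀ W}

/-- `(𝒜,T)` is `k`-spherical: every simplex of the chamber complex of codimension `k`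
meets `T`. -/
def IsKSpherical (𝒜 : Set (Set V)) (T : Set V) (k : ℕ) : Prop :=
  ∀ S ∈ chamberComplexOf 𝒜 T,
    Module.finrank ℝ (Submodule.span ℝ S) = Module.finrank ℝ V - k → (S ∩ T).Nonempty

/-- A reduced root system: `R ∩ ℝα = {±α}` for every `α ∈ R`. -/
def IsReducedRS (R : Set (Module.Dual ℝ V)) : Prop :=
  ∀ α ∈ R, {β ∈ R | ∃ c : ℝ, β = c • α} = {α, -α}

/-- The hyperplane `H` separates `K` and `K'`. -/
def SeparatesH (H K K' : Set V) : Prop :=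
  ∃ α : Module.Dual ℝ V, H = dualKer α ∧ (∀ x ∈ K, 0 < α x) ∧ ∀ x ∈ K', α x < 0

/-- The set `S(K,K')` of hyperplanes of `𝒜` separating `K` and `K'`. -/
def sepSet (𝒜 : Set (Set V)) (K K' : Set V) : Set (Set V) :=
  {H ∈ 𝒜 | SeparatesH H K K'}

/-- The reduction of a set of functionals: the shortest elements on each line. -/
def reducedOf (S : Set (Module.Dual ℝ V)) : Set (Module.Dual ℝ V) :=
  {β ∈ S | ∀ γ ∈ S, ∀ c : ℝ, γ = c • β → 1 ≤ |c|}

end Arrangements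

/-- The standard real vector space `ℝ^r`. -/
abbrev Vr (r : ℕ) : Type := Fin r → ℝ
section CartanGraphs

/-- A generalized Cartan matrix. -/
def IsGCM {I : Type*} (C : Matrix I I ℤ) : Prop :=
  (∀ i, C i i = 2) ∧ (∀ i j, i ≠ j → C i j ≤ 0) ∧
    ∀ i j, i ≠ j → C i j = 0 → C j i = 0

variable {I A : Type*} [Fintype I] [DecidableEq I]

/-- The reflection `σ_i` attached to a generalized Cartan matrix, acting on `ℤ^I`;
on the standard basis it is `σ_i(α_j) = α_j - c_{ij} α_i`. -/
def gcmSigma (C : Matrix I I ℤ) (i : I) : (I → ℤ) → (I → ℤ) :=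
  fun v k => v k - if k = i then ∑ j, C i j * v j else 0

/-- `WeylHom ρ C a b f` : `f` is a morphism from `a` to `b` of the Weyl groupoid of the
Cartan graph `(I, A, ρ, C)`, i.e. a composite of maps `σ_i^c ∈ Hom(c, ρ_i(c))`. -/
inductive WeylHom (ρ : I → A → A) (C : A → Matrix I I ℤ) :
    A → A → ((I → ℤ) → (I → ℤ)) → Prop
  | id (a : A) : WeylHom ρ C a a _root_.id
  | comp {a b : A} {f : (I → ℤ) → (I → ℤ)} (i : I) :
      WeylHom ρ C a b f → WeylHom ρ C a (ρ i b) (gcmSigma (C b) i ∘ f)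

/-- The axioms of a Cartan graph: `A` nonempty, all `C^a` generalized Cartan matrices,
(C1) each `ρ_i` an involution, (C2) `c^a_{ij} = c^{ρ_i(a)}_{ij}`. -/
def IsCartanGraph (ρ : I → A → A) (C : A → Matrix I I ℤ) : Prop :=
  Nonempty A ∧ (∀ a, IsGCM (C a)) ∧ (∀ i, Function.Involutive (ρ i)) ∧
    ∀ a i j, C a i j = C (ρ i a) i j

/-- Connectedness: all Hom-sets of the Weyl groupoid are nonempty. -/
def CGConnected (ρ : I → A → A) (C : A → Matrix I I ℤ) : Prop :=
  ∀ a b : A, ∃ f, WeylHom ρ C a b f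

/-- Simple connectedness: `Hom(a,a) = {id}` for every object `a`. -/
def CGSimplyConnected (ρ : I → A → A) (C : A → Matrix I I ℤ) : Prop :=
  ∀ (a : A) (f : (I → ℤ) → (I → ℤ)), WeylHom ρ C a a f → f = _root_.id

/-- The set of real roots at `a`: all images of standard basis vectors under morphisms
into `a`. -/
def realRootsAt (ρ : I → A → A) (C : A → Matrix I I ℤ) (a : A) : Set (I → ℤ) :=
  {v | ∃ (b : A) (f : (I → ℤ) → (I → ℤ)) (j : I), WeylHom ρ C b a f ∧ v = f (Pi.single j 1)}

/-- A root system of type `𝒞 = (I, A, ρ, C)`: axioms (R1)-(R4). -/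
def IsRootSystemOfType (ρ : I → A → A) (C : A → Matrix I I ℤ)
    (R : A → Set (I → ℤ)) : Prop :=
  (∀ a, R a = {v ∈ R a | ∀ i, 0 ≤ v i} ∪ (fun v => -v) '' {v ∈ R a | ∀ i, 0 ≤ v i}) ∧
  (∀ (a : A) (i : I), {v ∈ R a | ∃ n : ℤ, v = n • Pi.single i 1} =
      {Pi.single i 1, -Pi.single i 1}) ∧
  (∀ (a : A) (i : I), gcmSigma (C a) i '' R a = R (ρ i a)) ∧
  ∀ (a : A) (i j : I), i ≠ j →
    {v ∈ R a | ∃ m n : ℕ, v = (m : ℤ) • Pi.single i 1 + (n : ℤ) • Pi.single j 1}.Finite →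
    (ρ i ∘ ρ j)^[{v ∈ R a |
        ∃ m n : ℕ, v = (m : ℤ) • Pi.single i 1 + (n : ℤ) • Pi.single j 1}.ncard] a = a

end CartanGraphs
section GeometricRealization

variable {r : ℕ} {A : Type*}

/-- The map `ψ : ℤ^r → V*` determined by a basis `(β_i)` of `V*`: `ψ(α_i) = β_i`. -/
def psiMap (bβ : Module.Basis (Fin r) ℝ (Module.Dual ℝ (Vr r))) (v : Fin r → ℤ) :
    Module.Dual ℝ (Vr r) :=
  ∑ i, (v i : ℝ) • bβ i

/-- The open cone `K^b` attached to the (unique) morphism `u ∈ Hom(b,a)`: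
`K^b = ⋂_i ψ_b(α_i)^+` where `ψ_b(α_i) = ψ(u(α_i))`. -/
def Kch (bβ : Module.Basis (Fin r) ℝ (Module.Dual ℝ (Vr r)))
    (u : (Fin r → ℤ) → (Fin r → ℤ)) : Set (Vr r) :=
  {x | ∀ i : Fin r, 0 < psiMap bβ (u (Pi.single i 1)) x}

/-- The root system `R = ψ((R^re)^a)` of the geometric realization. -/
def geoR (ρ : Fin r → A → A) (C : A → Matrix (Fin r) (Fin r) ℤ) (a : A)
    (bβ : Module.Basis (Fin r) ℝ (Module.Dual ℝ (Vr r))) : Set (Module.Dual ℝ (Vr r)) :=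
  psiMap bβ '' realRootsAt ρ C a

/-- The arrangement `𝒜 = {ker α | α ∈ R}` of the geometric realization. -/
def geoA (ρ : Fin r → A → A) (C : A → Matrix (Fin r) (Fin r) ℤ) (a : A)
    (bβ : Module.Basis (Fin r) ℝ (Module.Dual ℝ (Vr r))) : Set (Set (Vr r)) :=
  {H | ∃ α ∈ geoR ρ C a bβ, H = dualKer α}

/-- Adjacency of objects `b, c` of the Cartan graph: the corresponding chambers `K^b`, `K^c`
are distinct and the span of `cl(K^b) ∩ cl(K^c)` is the wall `ker ψ_b(α_i)` for some `i`. -/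
def objAdj (ρ : Fin r → A → A) (C : A → Matrix (Fin r) (Fin r) ℤ) (a : A)
    (bβ : Module.Basis (Fin r) ℝ (Module.Dual ℝ (Vr r))) (b c : A) : Prop :=
  ∃ u u' : (Fin r → ℤ) → (Fin r → ℤ), WeylHom ρ C b a u ∧ WeylHom ρ C c a u' ∧
    ∃ i : Fin r, Kch bβ u ≠ Kch bβ u' ∧
      (Submodule.span ℝ (closure (Kch bβ u) ∩ closure (Kch bβ u')) : Set (Vr r)) =
        dualKer (psiMap bβ (u (Pi.single i 1)))

/-- The gallery distance between the chambers `K^b` and `K^{b'}`: the minimal length of a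
gallery from `K^b` to `K^{b'}`. -/
def galleryDist (ρ : Fin r → A → A) (C : A → Matrix (Fin r) (Fin r) ℤ) (a : A)
    (bβ : Module.Basis (Fin r) ℝ (Module.Dual ℝ (Vr r))) (b b' : A) : ℕ :=
  sInf {m : ℕ | ∃ g : ℕ → A, g 0 = b ∧ g m = b' ∧
    ∀ k < m, objAdj ρ C a bβ (g k) (g (k + 1))}

end GeometricRealization

section Proof9Helpers
variable {r : ℕ}

lemma dualKer_eq_ker (α : Module.Dual ℝ (Vr r)) :
    dualKer α = (LinearMap.ker α : Set (Vr r)) := by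
  ext v; simp [dualKer, LinearMap.mem_ker]

lemma wall_char_aux (γ : Module.Basis (Fin r) ℝ (Module.Dual ℝ (Vr r)))
    (d : Module.Basis (Fin r) ℝ (Vr r)) (hdd : ∀ i j, γ i (d j) = if i = j then 1 else 0)
    (hrepr : ∀ x : Vr r, x = ∑ j, γ j x • d j)
    {K : Set (Vr r)} (hcl : closure K = {x | ∀ i, 0 ≤ γ i x})
    (α : Module.Dual ℝ (Vr r)) (hα0 : α ≠ 0)
    (hspan : (Submodule.span ℝ (dualKer α ∩ closure K) : Set (Vr r)) = dualKer α)
    (hpos : ∀ j, 0 ≤ α (d j)) :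
    ∃ i, dualKer α = dualKer (γ i) := by
  classical
  have hj0 : ∃ j, 0 < α (d j) := by
    by_contra h
    push_neg at h
    exact hα0 (d.ext fun j => by
      simpa using le_antisymm (h j) (hpos j))
  obtain ⟨j0, hj0⟩ := hj0
  have hsub : dualKer α ∩ closure K ⊆ (LinearMap.ker (γ j0) : Set (Vr r)) := by
    rintro x ⟨hx1, hx2⟩
    have hx0 : α x = 0 := hx1
    rw [hcl] at hx2
    have hxsum : α x = ∑ j, γ j x * α (d j) := by
      conv_lhs => rw [hrepr x]
      rw [map_sum]
      simp [smul_eq_mul]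
    have hz : ∀ j ∈ Finset.univ, γ j x * α (d j) = 0 := by
      rw [← Finset.sum_eq_zero_iff_of_nonneg
        (fun j _ => mul_nonneg (hx2 j) (hpos j)), ← hxsum]
      exact hx0
    have h0 : γ j0 x * α (d j0) = 0 := hz j0 (Finset.mem_univ _)
    have : γ j0 x = 0 := by
      rcases mul_eq_zero.mp h0 with h | h
      · exact h
      · exact absurd h (ne_of_gt hj0)
    simpa [LinearMap.mem_ker] using this
  have hker : dualKer α ⊆ dualKer (γ j0) := by
    rw [← hspan, dualKer_eq_ker]
    intro x hx
    exact Submodule.span_le.mpr hsub hx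
  refine ⟨j0, Set.Subset.antisymm hker ?_⟩
  obtain ⟨v, hv⟩ : ∃ v, α v ≠ 0 := by
    by_contra h
    push_neg at h
    exact hα0 (LinearMap.ext fun w => by simp [h w])
  have hform : ∀ w, γ j0 w = (α w / α v) * γ j0 v := by
    intro w
    have hmem : (w - (α w / α v) • v) ∈ dualKer α := by
      show α (w - (α w / α v) • v) = 0
      rw [map_sub, map_smul, smul_eq_mul, div_mul_cancel₀ _ hv, sub_self]
    have h2 : γ j0 (w - (α w / α v) • v) = 0 := hker hmem
    rw [map_sub, map_smul, sub_eq_zero] at h2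
    simpa [smul_eq_mul] using h2
  have hγv : γ j0 v ≠ 0 := by
    intro h
    exact γ.ne_zero j0 (LinearMap.ext fun w => by rw [hform w, h, mul_zero]; rfl)
  intro x hx
  have hx0 : γ j0 x = 0 := hx
  have h1 : α x / α v * γ j0 v = 0 := by rw [← hform x, hx0]
  have h2 : α x / α v = 0 := by
    rcases mul_eq_zero.mp h1 with h | h
    · exact h
    · exact absurd h hγv
  show α x = 0
  rcases div_eq_zero_iff.mp h2 with h | h
  · exact h
  · exact absurd h hv

lemma wall_char (γ : Module.Basis (Fin r) ℝ (Module.Dual ℝ (Vr r)))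
    {K : Set (Vr r)} (hK : K = {x | ∀ i, 0 < γ i x})
    (H : Set (Vr r)) (hH : IsLinearHyperplane H) :
    (∃ i, H = dualKer (γ i)) ↔
      (H ∩ K = ∅ ∧ (Submodule.span ℝ (H ∩ closure K) : Set (Vr r)) = H) := by
  classical
  set d : Module.Basis (Fin r) ℝ (Vr r) :=
    γ.dualBasis.map (Module.evalEquiv ℝ (Vr r)).symm with hd
  have hdd : ∀ i j, γ i (d j) = if i = j then 1 else 0 := by
    intro i j
    have h1 : d j = (Module.evalEquiv ℝ (Vr r)).symm (γ.dualBasis j) := by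
      simp [hd]
    rw [h1, Module.apply_evalEquiv_symm_apply, Module.Basis.dualBasis_apply_self]
  have hrepr : ∀ x : Vr r, x = ∑ j, γ j x • d j := by
    intro x
    have h1 : ∀ j, d.repr x j = γ j x := by
      intro j
      conv_rhs => rw [← d.sum_repr x]
      rw [map_sum]
      simp only [map_smul, hdd, smul_eq_mul, mul_ite, mul_one, mul_zero]
      rw [Finset.sum_ite_eq, if_pos (Finset.mem_univ j)]
    conv_lhs => rw [← d.sum_repr x]
    exact Finset.sum_congr rfl fun j _ => by rw [h1 j]
  have hcont : ∀ β : Module.Dual ℝ (Vr r), Continuous β := fun β =>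
    β.continuous_of_finiteDimensional
  have hdcl : ∀ j, (∀ i, (0:ℝ) ≤ γ i (d j)) := by
    intro j i; rw [hdd]; split <;> norm_num
  have hcl : closure K = {x | ∀ i, 0 ≤ γ i x} := by
    apply Set.Subset.antisymm
    · apply closure_minimal
      · rw [hK]; intro x hx i; exact (hx i).le
      · have h1 : {x : Vr r | ∀ i, 0 ≤ γ i x} = ⋂ i, (γ i) ⁻¹' (Set.Ici 0) := by
          ext x; simp
        rw [h1]
        exact isClosed_iInter fun i => isClosed_Ici.preimage (hcont (γ i))
    · intro x hx
      have hv0 : ∀ i, γ i (∑ j, d j) = 1 := by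
        intro i; rw [map_sum]; simp [hdd]
      have htend : Filter.Tendsto (fun n : ℕ => x + (1 / (n + 1 : ℝ)) • ∑ j, d j)
          Filter.atTop (nhds x) := by
        have h0 : Filter.Tendsto (fun n : ℕ => (1 / (n + 1 : ℝ)) • ∑ j, d j)
            Filter.atTop (nhds ((0:ℝ) • ∑ j, d j)) :=
          tendsto_one_div_add_atTop_nhds_zero_nat.smul_const _
        rw [zero_smul] at h0
        simpa using h0.const_add x
      refine mem_closure_of_tendsto htend (Filter.Eventually.of_forall fun n => ?_)
      rw [hK]
      intro i
      rw [map_add, map_smul, hv0 i, smul_eq_mul, mul_one]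
      have h1 : (0:ℝ) < 1 / (n + 1 : ℝ) := by positivity
      have h2 := hx i
      linarith
  constructor
  · rintro ⟨i, rfl⟩
    constructor
    · rw [Set.eq_empty_iff_forall_notMem]
      rintro x ⟨hx1, hx2⟩
      rw [hK] at hx2
      have : γ i x = 0 := hx1
      exact absurd this (ne_of_gt (hx2 i))
    · apply Set.Subset.antisymm
      · intro x hx
        have h1 : Submodule.span ℝ (dualKer (γ i) ∩ closure K) ≤ LinearMap.ker (γ i) := by
          apply Submodule.span_le.mpr
          rintro y ⟨hy1, _⟩
          simpa [LinearMap.mem_ker, dualKer] using hy1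
        rw [dualKer_eq_ker]
        exact h1 hx
      · intro x hx
        have hxi : γ i x = 0 := hx
        rw [hrepr x]
        apply Submodule.sum_mem
        intro j _
        by_cases hij : j = i
        · subst hij
          rw [hxi, zero_smul]
          exact Submodule.zero_mem _
        · apply Submodule.smul_mem
          apply Submodule.subset_span
          refine ⟨?_, ?_⟩
          · show γ i (d j) = 0
            rw [hdd]
            simp [Ne.symm hij]
          · rw [hcl]; exact hdcl j
  · rintro ⟨hdisj, hspan⟩
    obtain ⟨α, hα0, rfl⟩ := hH
    have hKx : ∀ x ∈ K, α x ≠ 0 := by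
      intro x hx h0
      have hmem : x ∈ dualKer α ∩ K := ⟨h0, hx⟩
      rw [hdisj] at hmem
      exact hmem
    have hsign : (∀ x ∈ K, 0 < α x) ∨ (∀ x ∈ K, α x < 0) := by
      by_contra hcon
      push_neg at hcon
      obtain ⟨⟨x, hxK, hxle⟩, ⟨y, hyK, hyle⟩⟩ := hcon
      have hxneg : α x < 0 := lt_of_le_of_ne hxle (hKx x hxK)
      have hypos : 0 < α y := lt_of_le_of_ne hyle (Ne.symm (hKx y hyK))
      have hcontf : ContinuousOn (fun t : ℝ => α y + t * (α x - α y)) (Set.Icc 0 1) := by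
        fun_prop
      have hIVT := intermediate_value_Icc' (zero_le_one) hcontf
      have h0mem : (0:ℝ) ∈ Set.Icc (α y + 1 * (α x - α y)) (α y + 0 * (α x - α y)) := by
        constructor <;> simp <;> linarith
      obtain ⟨t, ht, hft⟩ := hIVT h0mem
      set z := y + t • (x - y) with hz
      have hzK : z ∈ K := by
        rw [hK]
        intro i
        rw [hK] at hxK hyK
        have hxi := hxK i
        have hyi := hyK i
        have heq : γ i z = γ i y + t * (γ i x - γ i y) := by
          rw [hz, map_add, map_smul, map_sub, smul_eq_mul]
        rw [heq]
        rcases eq_or_lt_of_le ht.2 with h1 | h1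
        · rw [h1]; linarith
        · nlinarith [ht.1]
      have hzH : α z = 0 := by
        have heq : α z = α y + t * (α x - α y) := by
          rw [hz, map_add, map_smul, map_sub, smul_eq_mul]
        rw [heq]
        simpa using hft
      exact hKx z hzK hzH
    have hclnn : ∀ β : Module.Dual ℝ (Vr r), (∀ x ∈ K, 0 < β x) →
        ∀ x ∈ closure K, 0 ≤ β x := by
      intro β hβ x hx
      have h1 : closure K ⊆ β ⁻¹' (Set.Ici 0) :=
        closure_minimal (fun y hy => (hβ y hy).le) (isClosed_Ici.preimage (hcont β))
      exact h1 hx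
    have hdclK : ∀ j, d j ∈ closure K := by
      intro j; rw [hcl]; exact hdcl j
    rcases hsign with hpos | hneg
    · exact wall_char_aux γ d hdd hrepr hcl α hα0 hspan
        (fun j => hclnn α hpos (d j) (hdclK j))
    · have hdkn : dualKer (-α) = dualKer α := by
        ext v; simp [dualKer]
      have hres := wall_char_aux γ d hdd hrepr hcl (-α) (neg_ne_zero.mpr hα0)
        (by rw [hdkn]; exact hspan)
        (fun j => hclnn (-α) (fun x hx => by simpa using hneg x hx) (d j) (hdclK j))
      rw [hdkn] at hres
      exact hres

lemma gcmSigma_add (C : Matrix (Fin r) (Fin r) ℤ) (i : Fin r) (v w : Fin r → ℤ) :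
    gcmSigma C i (v + w) = gcmSigma C i v + gcmSigma C i w := by
  funext k
  simp only [gcmSigma, Pi.add_apply, mul_add, Finset.sum_add_distrib]
  split <;> ring

lemma gcmSigma_invol (C : Matrix (Fin r) (Fin r) ℤ) (i : Fin r) (h2 : C i i = 2) :
    ∀ v, gcmSigma C i (gcmSigma C i v) = v := by
  intro v
  funext k
  simp only [gcmSigma]
  by_cases hk : k = i
  · subst hk
    have hsum : ∑ j, C k j * (v j - if j = k then ∑ l, C k l * v l else 0)
        = - ∑ j, C k j * v j := by
      simp only [mul_sub, Finset.sum_sub_distrib, mul_ite, mul_zero]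
      rw [Finset.sum_ite_eq' Finset.univ k (fun j => C k j * ∑ l, C k l * v l)]
      rw [if_pos (Finset.mem_univ k), h2]
      ring
    rw [if_pos rfl, if_pos rfl, hsum]
    ring
  · simp [hk]

/-- `gcmSigma` as an additive equivalence. -/
def gcmEquiv (C : Matrix (Fin r) (Fin r) ℤ) (i : Fin r) (h2 : C i i = 2) :
    (Fin r → ℤ) ≃+ (Fin r → ℤ) where
  toFun := gcmSigma C i
  invFun := gcmSigma C i
  left_inv := gcmSigma_invol C i h2
  right_inv := gcmSigma_invol C i h2
  map_add' := gcmSigma_add C i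

lemma gcmEquiv_apply (C : Matrix (Fin r) (Fin r) ℤ) (i : Fin r) (h2 : C i i = 2)
    (v : Fin r → ℤ) : gcmEquiv C i h2 v = gcmSigma C i v := rfl

lemma weylHom_addEquiv {A : Type*} {ρ : Fin r → A → A} {C : A → Matrix (Fin r) (Fin r) ℤ}
    (hC : ∀ a, IsGCM (C a)) {b a : A} {u : (Fin r → ℤ) → (Fin r → ℤ)}
    (hu : WeylHom ρ C b a u) :
    ∃ e : (Fin r → ℤ) ≃+ (Fin r → ℤ), ⇑e = u := by
  induction hu with
  | id => exact ⟨AddEquiv.refl _, rfl⟩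
  | @comp c f i h ih =>
    obtain ⟨e, he⟩ := ih
    refine ⟨e.trans (gcmEquiv (C c) i ((hC c).1 i)), ?_⟩
    funext v
    simp [AddEquiv.coe_trans, gcmEquiv_apply, he, Function.comp]

lemma psiMap_add (bβ : Module.Basis (Fin r) ℝ (Module.Dual ℝ (Vr r)))
    (x y : Fin r → ℤ) : psiMap bβ (x + y) = psiMap bβ x + psiMap bβ y := by
  simp only [psiMap, Pi.add_apply, Int.cast_add, add_smul, Finset.sum_add_distrib]

/-- `psiMap` as an additive monoid hom. -/
def psiHom (bβ : Module.Basis (Fin r) ℝ (Module.Dual ℝ (Vr r))) :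
    (Fin r → ℤ) →+ Module.Dual ℝ (Vr r) where
  toFun := psiMap bβ
  map_zero' := by simp [psiMap]
  map_add' := psiMap_add bβ

lemma psiMap_single (bβ : Module.Basis (Fin r) ℝ (Module.Dual ℝ (Vr r))) (k : Fin r) :
    psiMap bβ (Pi.single k 1) = bβ k := by
  have h1 : ∀ i : Fin r, (((Pi.single k 1 : Fin r → ℤ) i : ℤ) : ℝ) • bβ i
      = if i = k then bβ i else 0 := by
    intro i
    rw [Pi.single_apply]
    split <;> simp
  rw [psiMap, Finset.sum_congr rfl fun i _ => h1 i]
  rw [Finset.sum_ite_eq' Finset.univ k (fun i => bβ i), if_pos (Finset.mem_univ k)]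

lemma span_top {A : Type*} {ρ : Fin r → A → A} {C : A → Matrix (Fin r) (Fin r) ℤ}
    (hC : ∀ a, IsGCM (C a)) {b a : A} {u : (Fin r → ℤ) → (Fin r → ℤ)}
    (hu : WeylHom ρ C b a u) (bβ : Module.Basis (Fin r) ℝ (Module.Dual ℝ (Vr r))) :
    ⊤ ≤ Submodule.span ℝ (Set.range (fun i => psiMap bβ (u (Pi.single i 1)))) := by
  obtain ⟨e, he⟩ := weylHom_addEquiv hC hu
  set γ : Fin r → Module.Dual ℝ (Vr r) := fun i => psiMap bβ (u (Pi.single i 1)) with hγ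
  rw [← bβ.span_eq, Submodule.span_le]
  rintro _ ⟨k, rfl⟩
  set z := e.symm (Pi.single k 1) with hzdef
  have hz : u z = Pi.single k 1 := by rw [← he]; exact e.apply_symm_apply _
  have h2 : bβ k = psiMap bβ (u z) := by rw [hz, psiMap_single]
  have hsingle : ∀ (w : Fin r → ℤ) (i : Fin r),
      (Pi.single i (w i) : Fin r → ℤ) = w i • (Pi.single i 1 : Fin r → ℤ) := by
    intro w i
    funext j
    simp only [Pi.single_apply, Pi.smul_apply, smul_eq_mul]
    split <;> simp
  have h3 : u z = ∑ i, z i • u (Pi.single i 1) := by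
    rw [← he]
    calc e z = e (∑ i, Pi.single i (z i)) := by rw [Finset.univ_sum_single]
    _ = ∑ i, e (Pi.single i (z i)) := map_sum e _ _
    _ = ∑ i, z i • e (Pi.single i 1) := Finset.sum_congr rfl fun i _ => by
          rw [hsingle z i, map_zsmul]
  have h4 : psiMap bβ (∑ i, z i • u (Pi.single i 1)) = ∑ i, z i • γ i := by
    rw [show psiMap bβ (∑ i, z i • u (Pi.single i 1))
      = psiHom bβ (∑ i, z i • u (Pi.single i 1)) from rfl]
    rw [map_sum]
    refine Finset.sum_congr rfl fun i _ => ?_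
    rw [map_zsmul]
    rfl
  rw [h2, h3, h4]
  exact Submodule.sum_mem _ fun i _ =>
    zsmul_mem (Submodule.subset_span (Set.mem_range_self i)) _
end Proof9Helpers

/-- characterization of walls: in the geometric realization of a connected
simply connected Cartan graph `𝒞` with real root system, for `b ∈ A` and a hyperplane
`H ⊆ V`: `H ∈ W^b` (i.e. `H = ker β` for some `β ∈ B^b`) if and only if `H ∩ K^b = ∅`
and `H ∩ cl(K^b)` spans `H`. -/
theorem statement_9 {r : ℕ} {A : Type*}
    (ρ : Fin r → A → A) (C : A → Matrix (Fin r) (Fin r) ℤ)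
    (hCG : IsCartanGraph ρ C) (hconn : CGConnected ρ C) (hsc : CGSimplyConnected ρ C)
    (hRS : IsRootSystemOfType ρ C (realRootsAt ρ C))
    (a : A) (bβ : Module.Basis (Fin r) ℝ (Module.Dual ℝ (Vr r)))
    (b : A) (u : (Fin r → ℤ) → (Fin r → ℤ)) (hu : WeylHom ρ C b a u) :
    ∀ H : Set (Vr r), IsLinearHyperplane H →
      ((∃ i : Fin r, H = dualKer (psiMap bβ (u (Pi.single i 1)))) ↔
        (H ∩ Kch bβ u = ∅ ∧
          (Submodule.span ℝ (H ∩ closure (Kch bβ u)) : Set (Vr r)) = H)) := by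
  have hspan := span_top hCG.2.1 hu bβ
  have hcard : Fintype.card (Fin r) = Module.finrank ℝ (Module.Dual ℝ (Vr r)) :=
    (Module.finrank_eq_card_basis bβ).symm
  have hco : ⇑(basisOfTopLeSpanOfCardEqFinrank _ hspan hcard)
      = fun i => psiMap bβ (u (Pi.single i 1)) :=
    coe_basisOfTopLeSpanOfCardEqFinrank _ hspan hcard
  intro H hH
  have hK : Kch bβ u = {x | ∀ i, 0 < (basisOfTopLeSpanOfCardEqFinrank _ hspan hcard) i x} := by
    rw [hco]; rfl
  have hiff := wall_char (basisOfTopLeSpanOfCardEqFinrank _ hspan hcard) hK H hH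
  simp only [hco] at hiff
  exact hiff
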